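/- Let F be an outward pointing field of arrows on A_{n+1} and let B be the union, over all lattice squares S, of the two sides of S lying in the direction that the arrow of S points. Then every connected component of A_{n+1} \ B is the interior of either a 1×2 (or 2×1) rectangle or a 2×2 square, and the 2×2 square components are exactly the 2×2 squares centered at repelling nodes of F. -/

import Mathlib

/-- A unit lattice square with lower-left corner `c` belongs to the Aztec diamond of
order `m` iff it intersects the open region `{(x,y) : |x|+|y| < m}`; equivalently the
distance-to-origin data of the cell satisfies this inequality. -/
def aztecCell (m : ℕ) (c : ℤ × ℤ) : Prop :=
  max c.1 (-c.1 - 1) + max c.2 (-c.2 - 1) < (m : ℤ)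

instance (m : ℕ) : DecidablePred (aztecCell m) := fun c => by
  unfold aztecCell; infer_instance

/-- Two unit lattice squares are adjacent (form a domino) iff they share a full edge. -/
def Adjacent (c d : ℤ × ℤ) : Prop :=
  (c.1 = d.1 ∧ |c.2 - d.2| = 1) ∨ (c.2 = d.2 ∧ |c.1 - d.1| = 1)

/-- A domino tiling of the Aztec diamond of order `m`, encoded as the involution
matching each unit square of the region with the other half of its domino,
and fixing everything outside the region. -/
def IsTiling (m : ℕ) (t : ℤ × ℤ → ℤ × ℤ) : Prop :=
  (∀ c, aztecCell m c → aztecCell m (t c) ∧ t (t c) = c ∧ Adjacent c (t c)) ∧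
  (∀ c, ¬ aztecCell m c → t c = c)

/-- `p` is a lattice point of the Aztec diamond of order `m` (a corner of one of its cells). -/
def aztecPoint (m : ℕ) (p : ℤ × ℤ) : Prop :=
  max (|p.1| - 1) 0 + max (|p.2| - 1) 0 < (m : ℤ)

instance (m : ℕ) : DecidablePred (aztecPoint m) := fun p => by
  unfold aztecPoint; infer_instance

/-- A node: a lattice point `(i,j)` of `A_{n+1}` with `i + j ≡ n (mod 2)`. -/
def IsNode (n : ℕ) (p : ℤ × ℤ) : Prop :=
  aztecPoint (n + 1) p ∧ (p.1 + p.2 - (n : ℤ)) % 2 = 0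

/-- An interior node: a node contained in `A_n`. -/
def InteriorNode (n : ℕ) (p : ℤ × ℤ) : Prop :=
  IsNode n p ∧ aztecPoint n p

/-- `p` is a corner of the unit square with lower-left corner `c`. -/
def SqCorner (c p : ℤ × ℤ) : Prop :=
  (p.1 = c.1 ∨ p.1 = c.1 + 1) ∧ (p.2 = c.2 ∨ p.2 = c.2 + 1)

instance (c p : ℤ × ℤ) : Decidable (SqCorner c p) := by
  unfold SqCorner; infer_instance

/-- The two corners of the lattice square `c` that are nodes; they are diagonally opposite. -/
def cellDiag (n : ℕ) (c : ℤ × ℤ) : (ℤ × ℤ) × (ℤ × ℤ) :=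
  if (c.1 + c.2 - (n : ℤ)) % 2 = 0 then (c, (c.1 + 1, c.2 + 1))
  else ((c.1 + 1, c.2), (c.1, c.2 + 1))

/-- `A` assigns to each lattice square the head of its arrow.  An interior node `N` is
attracting if all four adjacent arrows point towards `N`. -/
def Attracting (A : ℤ × ℤ → ℤ × ℤ) (N : ℤ × ℤ) : Prop :=
  A (N.1 - 1, N.2 - 1) = N ∧ A (N.1, N.2 - 1) = N ∧ A (N.1 - 1, N.2) = N ∧ A N = N

/-- An interior node `N` is repelling if all four adjacent arrows point away from `N`
(towards the opposite corner of the respective square). -/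
def Repelling (A : ℤ × ℤ → ℤ × ℤ) (N : ℤ × ℤ) : Prop :=
  A (N.1 - 1, N.2 - 1) = (N.1 - 1, N.2 - 1) ∧ A (N.1, N.2 - 1) = (N.1 + 1, N.2 - 1) ∧
  A (N.1 - 1, N.2) = (N.1 - 1, N.2 + 1) ∧ A N = (N.1 + 1, N.2 + 1)

/-- An interior node `N` is transient if any two collinear arrows adjacent to `N`
point in the same direction. -/
def Transient (A : ℤ × ℤ → ℤ × ℤ) (N : ℤ × ℤ) : Prop :=
  ((A (N.1 - 1, N.2 - 1) = N) ↔ (A N = (N.1 + 1, N.2 + 1))) ∧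
  ((A (N.1, N.2 - 1) = N) ↔ (A (N.1 - 1, N.2) = (N.1 - 1, N.2 + 1)))

/-- A field of arrows on `A_{n+1}`: in each lattice square an arrow joining its two
corner nodes, such that every interior node is attracting, repelling or transient. -/
def IsArrowField (n : ℕ) (A : ℤ × ℤ → ℤ × ℤ) : Prop :=
  (∀ c, aztecCell (n + 1) c → A c = (cellDiag n c).1 ∨ A c = (cellDiag n c).2) ∧
  (∀ N, InteriorNode n N → Attracting A N ∨ Repelling A N ∨ Transient A N)

/-- A boundary square: a lattice square of `A_{n+1}` not contained in `A_n`. -/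
def BoundaryCell (n : ℕ) (c : ℤ × ℤ) : Prop := aztecCell (n + 1) c ∧ ¬ aztecCell n c

/-- The field points outward: in every boundary square the arrow points towards the
corner node on the boundary of `A_{n+1}` (i.e. not an interior node). -/
def Outward (n : ℕ) (A : ℤ × ℤ → ℤ × ℤ) : Prop :=
  ∀ c, BoundaryCell n c → ¬ aztecPoint n (A c)

/-- The field points inward: in every boundary square the arrow points towards the
interior node. -/
def Inward (n : ℕ) (A : ℤ × ℤ → ℤ × ℤ) : Prop :=
  ∀ c, BoundaryCell n c → aztecPoint n (A c)

/-- The number of repelling interior nodes of a field of arrows. -/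
noncomputable def repCount (n : ℕ) (A : ℤ × ℤ → ℤ × ℤ) : ℕ :=
  Set.ncard {N : ℤ × ℤ | InteriorNode n N ∧ Repelling A N}

/-- The field of arrows associated to a tiling: in each lattice square the arrow points
towards the corner node of the domino containing that square (the node corner of the
square which is not a corner of its partner square). -/
def tilingArrow (n : ℕ) (t : ℤ × ℤ → ℤ × ℤ) (c : ℤ × ℤ) : ℤ × ℤ :=
  if SqCorner (t c) (cellDiag n c).1 then (cellDiag n c).2 else (cellDiag n c).1

/-- The closed unit square of the plane corresponding to the cell `c`. -/
def cellRegion (c : ℤ × ℤ) : Set (ℝ × ℝ) :=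
  Set.Icc (c.1 : ℝ) (c.1 + 1) ×ˢ Set.Icc (c.2 : ℝ) (c.2 + 1)

/-- The Aztec diamond of order `m` as a subset of the plane. -/
def aztecRegion (m : ℕ) : Set (ℝ × ℝ) :=
  ⋃ c ∈ {c : ℤ × ℤ | aztecCell m c}, cellRegion c

/-- The union `B` over all lattice squares `S` of `A_{n+1}` of the two sides of `S`
meeting at the corner towards which the arrow of `S` points. -/
def boldLines (n : ℕ) (A : ℤ × ℤ → ℤ × ℤ) : Set (ℝ × ℝ) :=
  ⋃ c ∈ {c : ℤ × ℤ | aztecCell (n + 1) c},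
    (Set.Icc (c.1 : ℝ) (c.1 + 1) ×ˢ ({((A c).2 : ℝ)} : Set ℝ) ∪
      ({((A c).1 : ℝ)} : Set ℝ) ×ˢ Set.Icc (c.2 : ℝ) (c.2 + 1))

section Aux
open Set

-- arithmetic reformulations
lemma aztecCell_iff (m : ℕ) (a b : ℤ) : aztecCell m (a, b) ↔
    a + b < m ∧ a - b - 1 < m ∧ b - a - 1 < m ∧ -a - b - 2 < m := by
  unfold aztecCell; dsimp only; rw [max_def, max_def]; split_ifs <;> omega

lemma aztecPoint_iff (m : ℕ) (a b : ℤ) : aztecPoint m (a, b) ↔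
    (a-1) + (b-1) < m ∧ (a-1) + (-b-1) < m ∧ (a-1) + 0 < m ∧
    (-a-1) + (b-1) < m ∧ (-a-1) + (-b-1) < m ∧ (-a-1) + 0 < m ∧
    0 + (b-1) < m ∧ 0 + (-b-1) < m ∧ (0:ℤ) + 0 < m := by
  unfold aztecPoint; dsimp only
  rw [abs_eq_max_neg, abs_eq_max_neg]
  simp only [max_def]
  split_ifs <;> omega

lemma AL1 (m : ℕ) (a b x y : ℤ) (hc : aztecCell m (a,b)) (h1 : a ≤ x) (h2 : x ≤ a+1)
    (h3 : b ≤ y) (h4 : y ≤ b+1) : aztecPoint m (x,y) := by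
  rw [aztecCell_iff] at hc; rw [aztecPoint_iff]; omega

lemma AL2 (n : ℕ) (hn : 1 ≤ n) (a b x y : ℤ) (hc : aztecCell (n+1) (a,b))
    (hx : x = a ∨ x = a + 1) (hy : y = b ∨ y = b + 1)
    (h1 : ¬ aztecPoint n (x, y)) (h2 : ¬ aztecPoint n (2*a+1-x, 2*b+1-y)) : False := by
  rw [aztecCell_iff] at hc; rw [aztecPoint_iff] at h1 h2; omega

lemma AL4 (n : ℕ) (u v : ℤ) (h : aztecPoint n (u,v)) (hpar : (u + v - (n:ℤ)) % 2 = 0) :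
    aztecCell (n+1) (u-1,v-1) ∧ aztecCell (n+1) (u,v-1) ∧ aztecCell (n+1) (u-1,v) ∧
      aztecCell (n+1) (u,v) := by
  rw [aztecPoint_iff] at h; refine ⟨?_, ?_, ?_, ?_⟩ <;> rw [aztecCell_iff] <;> omega

lemma AL5 (n : ℕ) (a b a' b' : ℤ) (h : aztecCell n (a,b))
    (hd : (a' = a - 1 ∨ a' = a + 1) ∧ b' = b ∨ a' = a ∧ (b' = b - 1 ∨ b' = b + 1)) :
    aztecCell (n+1) (a',b') := by
  rw [aztecCell_iff] at *; omega

lemma AL7 (n : ℕ) (u v : ℤ) (h : aztecPoint n (u,v)) : aztecPoint (n+1) (u,v) := by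
  rw [aztecPoint_iff] at *; omega

-- membership lemmas
lemma mem_aztecRegion {m : ℕ} {x : ℝ × ℝ} :
    x ∈ aztecRegion m ↔ ∃ c : ℤ × ℤ, aztecCell m c ∧
      (c.1:ℝ) ≤ x.1 ∧ x.1 ≤ c.1+1 ∧ (c.2:ℝ) ≤ x.2 ∧ x.2 ≤ c.2+1 := by
  unfold aztecRegion cellRegion
  simp only [mem_iUnion, mem_setOf_eq, mem_prod, mem_Icc, exists_prop]
  tauto

lemma mem_boldLines {n : ℕ} {A : ℤ × ℤ → ℤ × ℤ} {x : ℝ × ℝ} :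
    x ∈ boldLines n A ↔ ∃ c : ℤ × ℤ, aztecCell (n+1) c ∧
      (((c.1:ℝ) ≤ x.1 ∧ x.1 ≤ c.1+1 ∧ x.2 = ((A c).2 : ℝ)) ∨
       (x.1 = ((A c).1 : ℝ) ∧ (c.2:ℝ) ≤ x.2 ∧ x.2 ≤ c.2+1)) := by
  unfold boldLines
  simp only [mem_iUnion, mem_setOf_eq, mem_union, mem_prod, mem_Icc, mem_singleton_iff,
    exists_prop]
  constructor
  · rintro ⟨c, hc, ⟨⟨h1, h2⟩, h3⟩ | ⟨h1, h2, h3⟩⟩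
    · exact ⟨c, hc, Or.inl ⟨h1, h2, h3⟩⟩
    · exact ⟨c, hc, Or.inr ⟨h1, h2, h3⟩⟩
  · rintro ⟨c, hc, ⟨h1, h2, h3⟩ | ⟨h1, h2, h3⟩⟩
    · exact ⟨c, hc, Or.inl ⟨⟨h1, h2⟩, h3⟩⟩
    · exact ⟨c, hc, Or.inr ⟨h1, ⟨h2, h3⟩⟩⟩

-- topology
lemma comp_eq_of_clopen {S R : Set (ℝ × ℝ)} {x : ℝ × ℝ}
    (hx : x ∈ R) (hRS : R ⊆ S) (hRo : IsOpen R) (hRc : IsPreconnected R)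
    (hcl : S ∩ closure R ⊆ R) : connectedComponentIn S x = R := by
  apply Set.Subset.antisymm
  · have hC : IsPreconnected (connectedComponentIn S x) := isPreconnected_connectedComponentIn
    have hCS : connectedComponentIn S x ⊆ S := connectedComponentIn_subset S x
    by_contra hsub
    rw [Set.not_subset] at hsub
    obtain ⟨y, hyC, hyR⟩ := hsub
    have h1 : connectedComponentIn S x ⊆ R ∪ (closure R)ᶜ := by
      intro z hz
      by_cases hz' : z ∈ closure R
      · exact Or.inl (hcl ⟨hCS hz, hz'⟩)
      · exact Or.inr hz'
    have h2 : (connectedComponentIn S x ∩ R).Nonempty :=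
      ⟨x, mem_connectedComponentIn (hRS hx), hx⟩
    have h3 : (connectedComponentIn S x ∩ (closure R)ᶜ).Nonempty := by
      refine ⟨y, hyC, fun hy => hyR (hcl ⟨hCS hyC, hy⟩)⟩
    obtain ⟨z, _, hz2, hz3⟩ := hC R (closure R)ᶜ hRo isClosed_closure.isOpen_compl h1 h2 h3
    exact hz3 (subset_closure hz2)
  · exact hRc.subset_connectedComponentIn hx hRS

lemma exists_row (r s : ℤ) (hrs : r < s) (y : ℝ) (h1 : (r:ℝ) ≤ y) (h2 : y ≤ s) :
    ∃ b : ℤ, r ≤ b ∧ b < s ∧ (b:ℝ) ≤ y ∧ y ≤ b+1 := by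
  refine ⟨min ⌊y⌋ (s-1), le_min (Int.le_floor.2 h1) (by omega), by omega, ?_, ?_⟩
  · rcases le_total (⌊y⌋ : ℤ) (s-1) with h | h
    · rw [min_eq_left h]; exact Int.floor_le y
    · rw [min_eq_right h]
      have h' : ((s - 1 : ℤ) : ℝ) ≤ (⌊y⌋ : ℝ) := by exact_mod_cast h
      push_cast at h' ⊢
      linarith [Int.floor_le y]
  · rcases le_total (⌊y⌋ : ℤ) (s-1) with h | h
    · rw [min_eq_left h]; exact le_of_lt (Int.lt_floor_add_one y)
    · rw [min_eq_right h]; push_cast; linarith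

end Aux
section Rect
open Set

lemma rect_comp (n : ℕ) (A : ℤ × ℤ → ℤ × ℤ) (p q r s : ℤ) (hpq : p < q) (hrs : r < s)
    (hcell : ∀ a b : ℤ, p ≤ a → a < q → r ≤ b → b < s → aztecCell (n+1) (a,b))
    (hno : ∀ a b : ℤ, aztecCell (n+1) (a,b) →
      (p < a + 1 → a < q → r < (A (a,b)).2 → (A (a,b)).2 < s → False) ∧
      (r < b + 1 → b < s → p < (A (a,b)).1 → (A (a,b)).1 < q → False))
    (hL : ∀ b : ℤ, r ≤ b → b < s → ∃ a, aztecCell (n+1) (a,b) ∧ (A (a,b)).1 = p)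
    (hR : ∀ b : ℤ, r ≤ b → b < s → ∃ a, aztecCell (n+1) (a,b) ∧ (A (a,b)).1 = q)
    (hD : ∀ a : ℤ, p ≤ a → a < q → ∃ b, aztecCell (n+1) (a,b) ∧ (A (a,b)).2 = r)
    (hU : ∀ a : ℤ, p ≤ a → a < q → ∃ b, aztecCell (n+1) (a,b) ∧ (A (a,b)).2 = s)
    {x : ℝ × ℝ} (hx : x ∈ Set.Ioo (p:ℝ) q ×ˢ Set.Ioo (r:ℝ) s) :
    connectedComponentIn (aztecRegion (n+1) \ boldLines n A) x =
      Set.Ioo (p:ℝ) q ×ˢ Set.Ioo (r:ℝ) s := by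
  have hpq' : (p:ℝ) < q := by exact_mod_cast hpq
  have hrs' : (r:ℝ) < s := by exact_mod_cast hrs
  apply comp_eq_of_clopen hx
  · -- R ⊆ region \ bold
    intro y hy
    rw [Set.mem_prod, Set.mem_Ioo, Set.mem_Ioo] at hy
    obtain ⟨⟨hy1l, hy1r⟩, hy2l, hy2r⟩ := hy
    constructor
    · rw [mem_aztecRegion]
      obtain ⟨a, ha1, ha2, ha3, ha4⟩ := exists_row p q hpq y.1 hy1l.le hy1r.le
      obtain ⟨b, hb1, hb2, hb3, hb4⟩ := exists_row r s hrs y.2 hy2l.le hy2r.le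
      exact ⟨(a,b), hcell a b ha1 ha2 hb1 hb2, ha3, by push_cast; exact ha4,
        hb3, by push_cast; exact hb4⟩
    · intro hB
      rw [mem_boldLines] at hB
      obtain ⟨⟨a,b⟩, hc, hcase⟩ := hB
      rcases hcase with ⟨h1, h2, h3⟩ | ⟨h1, h2, h3⟩
      · refine (hno a b hc).1 ?_ ?_ ?_ ?_
        · have : ((p:ℤ):ℝ) < ((a + 1 : ℤ):ℝ) := by push_cast; linarith
          exact_mod_cast this
        · exact_mod_cast lt_of_le_of_lt h1 hy1r
        · have : (r:ℝ) < ((A (a,b)).2 : ℝ) := by rw [← h3]; exact hy2l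
          exact_mod_cast this
        · have : ((A (a,b)).2 : ℝ) < s := by rw [← h3]; exact hy2r
          exact_mod_cast this
      · refine (hno a b hc).2 ?_ ?_ ?_ ?_
        · have : ((r:ℤ):ℝ) < ((b + 1 : ℤ):ℝ) := by push_cast; linarith
          exact_mod_cast this
        · exact_mod_cast lt_of_le_of_lt h2 hy2r
        · have : (p:ℝ) < ((A (a,b)).1 : ℝ) := by rw [← h1]; exact hy1l
          exact_mod_cast this
        · have : ((A (a,b)).1 : ℝ) < q := by rw [← h1]; exact hy1r
          exact_mod_cast this
  · exact isOpen_Ioo.prod isOpen_Ioo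
  · exact isPreconnected_Ioo.prod isPreconnected_Ioo
  · rw [closure_prod_eq, closure_Ioo hpq'.ne, closure_Ioo hrs'.ne]
    rintro y ⟨⟨hyreg, hynB⟩, hycl⟩
    rw [Set.mem_prod, Set.mem_Icc, Set.mem_Icc] at hycl
    obtain ⟨⟨hp1, hq1⟩, hr2, hs2⟩ := hycl
    by_contra hyR
    rw [Set.mem_prod, Set.mem_Ioo, Set.mem_Ioo] at hyR
    apply hynB
    rw [mem_boldLines]
    have hside : y.1 = (p:ℝ) ∨ y.1 = (q:ℝ) ∨ y.2 = (r:ℝ) ∨ y.2 = (s:ℝ) := by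
      by_contra hno'
      push_neg at hno'
      exact hyR ⟨⟨lt_of_le_of_ne hp1 (Ne.symm hno'.1), lt_of_le_of_ne hq1 hno'.2.1⟩,
        lt_of_le_of_ne hr2 (Ne.symm hno'.2.2.1), lt_of_le_of_ne hs2 hno'.2.2.2⟩
    rcases hside with h | h | h | h
    · obtain ⟨b, hb1, hb2, hb3, hb4⟩ := exists_row r s hrs y.2 hr2 hs2
      obtain ⟨a, hca, hAa⟩ := hL b hb1 hb2
      exact ⟨(a,b), hca, Or.inr ⟨by rw [h, hAa], hb3, by push_cast; exact hb4⟩⟩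
    · obtain ⟨b, hb1, hb2, hb3, hb4⟩ := exists_row r s hrs y.2 hr2 hs2
      obtain ⟨a, hca, hAa⟩ := hR b hb1 hb2
      exact ⟨(a,b), hca, Or.inr ⟨by rw [h, hAa], hb3, by push_cast; exact hb4⟩⟩
    · obtain ⟨a, ha1, ha2, ha3, ha4⟩ := exists_row p q hpq y.1 hp1 hq1
      obtain ⟨b, hcb, hAb⟩ := hD a ha1 ha2
      exact ⟨(a,b), hcb, Or.inl ⟨ha3, by push_cast; exact ha4, by rw [h, hAb]⟩⟩
    · obtain ⟨a, ha1, ha2, ha3, ha4⟩ := exists_row p q hpq y.1 hp1 hq1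
      obtain ⟨b, hcb, hAb⟩ := hU a ha1 ha2
      exact ⟨(a,b), hcb, Or.inl ⟨ha3, by push_cast; exact ha4, by rw [h, hAb]⟩⟩

end Rect
section Field
open Set

variable {n : ℕ} {A : ℤ × ℤ → ℤ × ℤ}

lemma head_cases (hA : IsArrowField n A) {a b : ℤ} (hc : aztecCell (n+1) (a,b)) :
    ((a + b - (n:ℤ)) % 2 = 0 ∧ (A (a,b) = (a,b) ∨ A (a,b) = (a+1,b+1))) ∨
    ((a + b - (n:ℤ)) % 2 ≠ 0 ∧ (A (a,b) = (a+1,b) ∨ A (a,b) = (a,b+1))) := by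
  have h := hA.1 (a,b) hc
  unfold cellDiag at h
  dsimp only at h
  split_ifs at h with hp
  · exact Or.inl ⟨hp, h⟩
  · exact Or.inr ⟨hp, h⟩

lemma head_fst (hA : IsArrowField n A) {a b : ℤ} (hc : aztecCell (n+1) (a,b)) :
    (A (a,b)).1 = a ∨ (A (a,b)).1 = a + 1 := by
  rcases head_cases hA hc with ⟨_, h | h⟩ | ⟨_, h | h⟩ <;> rw [h] <;> tauto

lemma head_snd (hA : IsArrowField n A) {a b : ℤ} (hc : aztecCell (n+1) (a,b)) :
    (A (a,b)).2 = b ∨ (A (a,b)).2 = b + 1 := by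
  rcases head_cases hA hc with ⟨_, h | h⟩ | ⟨_, h | h⟩ <;> rw [h] <;> tauto

lemma bnd_left (hA : IsArrowField n A) (hout : Outward n A) (hn : 1 ≤ n) {a b : ℤ}
    (hc : aztecCell (n+1) (a,b)) (hm : ¬ aztecCell (n+1) (a-1,b)) : (A (a,b)).1 = a := by
  have hbd : ¬ aztecCell n (a,b) := fun h => hm (AL5 n a b (a-1) b h (by tauto))
  have hOut := hout (a,b) ⟨hc, hbd⟩
  have hc2 := hc
  rw [aztecCell_iff] at hc2 hm
  rcases head_cases hA hc with ⟨hp, h | h⟩ | ⟨hp, h | h⟩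
  · rw [h]
  · exfalso; apply hOut; rw [h, aztecPoint_iff]; omega
  · exfalso; apply hOut; rw [h, aztecPoint_iff]; omega
  · rw [h]

lemma bnd_right (hA : IsArrowField n A) (hout : Outward n A) (hn : 1 ≤ n) {a b : ℤ}
    (hc : aztecCell (n+1) (a,b)) (hm : ¬ aztecCell (n+1) (a+1,b)) : (A (a,b)).1 = a + 1 := by
  have hbd : ¬ aztecCell n (a,b) := fun h => hm (AL5 n a b (a+1) b h (by tauto))
  have hOut := hout (a,b) ⟨hc, hbd⟩
  have hc2 := hc
  rw [aztecCell_iff] at hc2 hm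
  rcases head_cases hA hc with ⟨hp, h | h⟩ | ⟨hp, h | h⟩
  · exfalso; apply hOut; rw [h, aztecPoint_iff]; omega
  · rw [h]
  · rw [h]
  · exfalso; apply hOut; rw [h, aztecPoint_iff]; omega

lemma bnd_down (hA : IsArrowField n A) (hout : Outward n A) (hn : 1 ≤ n) {a b : ℤ}
    (hc : aztecCell (n+1) (a,b)) (hm : ¬ aztecCell (n+1) (a,b-1)) : (A (a,b)).2 = b := by
  have hbd : ¬ aztecCell n (a,b) := fun h => hm (AL5 n a b a (b-1) h (by tauto))
  have hOut := hout (a,b) ⟨hc, hbd⟩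
  have hc2 := hc
  rw [aztecCell_iff] at hc2 hm
  rcases head_cases hA hc with ⟨hp, h | h⟩ | ⟨hp, h | h⟩
  · rw [h]
  · exfalso; apply hOut; rw [h, aztecPoint_iff]; omega
  · rw [h]
  · exfalso; apply hOut; rw [h, aztecPoint_iff]; omega

lemma bnd_up (hA : IsArrowField n A) (hout : Outward n A) (hn : 1 ≤ n) {a b : ℤ}
    (hc : aztecCell (n+1) (a,b)) (hm : ¬ aztecCell (n+1) (a,b+1)) : (A (a,b)).2 = b + 1 := by
  have hbd : ¬ aztecCell n (a,b) := fun h => hm (AL5 n a b a (b+1) h (by tauto))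
  have hOut := hout (a,b) ⟨hc, hbd⟩
  have hc2 := hc
  rw [aztecCell_iff] at hc2 hm
  rcases head_cases hA hc with ⟨hp, h | h⟩ | ⟨hp, h | h⟩
  · exfalso; apply hOut; rw [h, aztecPoint_iff]; omega
  · rw [h]
  · exfalso; apply hOut; rw [h, aztecPoint_iff]; omega
  · rw [h]

lemma tail_interior (hout : Outward n A) (hn : 1 ≤ n) (a b x y : ℤ)
    (hc : aztecCell (n+1) (a,b)) (hx : x = a ∨ x = a+1) (hy : y = b ∨ y = b+1)
    (hhead : A (a,b) = (2*a+1-x, 2*b+1-y)) : aztecPoint n (x,y) := by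
  by_cases hin : aztecCell n (a,b)
  · exact AL1 n a b x y hin (by omega) (by omega) (by omega) (by omega)
  · have hOut := hout (a,b) ⟨hc, hin⟩
    rw [hhead] at hOut
    by_contra h1
    exact AL2 n hn a b x y hc hx hy h1 hOut

lemma node_cases (hA : IsArrowField n A) {u v : ℤ} (hT : aztecPoint n (u,v))
    (hpar : (u + v - (n:ℤ)) % 2 = 0) :
    Attracting A (u,v) ∨ Repelling A (u,v) ∨ Transient A (u,v) :=
  hA.2 (u,v) ⟨⟨AL7 n u v hT, hpar⟩, hT⟩

-- heads of the four cells around a node (u,v)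
lemma around_LL (hA : IsArrowField n A) {u v : ℤ} (hc : aztecCell (n+1) (u-1,v-1))
    (hpar : (u + v - (n:ℤ)) % 2 = 0) :
    A (u-1,v-1) = (u-1,v-1) ∨ A (u-1,v-1) = (u,v) := by
  rcases head_cases hA hc with ⟨hp, h | h⟩ | ⟨hp, _⟩
  · exact Or.inl h
  · exact Or.inr (by rw [h]; simp [Prod.ext_iff] <;> omega)
  · exact absurd hp (by omega)

lemma around_LR (hA : IsArrowField n A) {u v : ℤ} (hc : aztecCell (n+1) (u,v-1))
    (hpar : (u + v - (n:ℤ)) % 2 = 0) :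
    A (u,v-1) = (u+1,v-1) ∨ A (u,v-1) = (u,v) := by
  rcases head_cases hA hc with ⟨hp, _⟩ | ⟨hp, h | h⟩
  · exact absurd hp (by omega)
  · exact Or.inl h
  · exact Or.inr (by rw [h]; simp [Prod.ext_iff] <;> omega)

lemma around_UL (hA : IsArrowField n A) {u v : ℤ} (hc : aztecCell (n+1) (u-1,v))
    (hpar : (u + v - (n:ℤ)) % 2 = 0) :
    A (u-1,v) = (u,v) ∨ A (u-1,v) = (u-1,v+1) := by
  rcases head_cases hA hc with ⟨hp, _⟩ | ⟨hp, h | h⟩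
  · exact absurd hp (by omega)
  · exact Or.inl (by rw [h]; simp [Prod.ext_iff] <;> omega)
  · exact Or.inr h

lemma around_UR (hA : IsArrowField n A) {u v : ℤ} (hc : aztecCell (n+1) (u,v))
    (hpar : (u + v - (n:ℤ)) % 2 = 0) :
    A (u,v) = (u,v) ∨ A (u,v) = (u+1,v+1) := by
  rcases head_cases hA hc with ⟨hp, h⟩ | ⟨hp, _⟩
  · exact h
  · exact absurd hp (by omega)

end Field
section Shapes
open Set

variable {n : ℕ} {A : ℤ × ℤ → ℤ × ℤ}

lemma transient_config (hA : IsArrowField n A) {u v : ℤ} (hT : aztecPoint n (u,v))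
    (hpar : (u + v - (n:ℤ)) % 2 = 0) (htr : Transient A (u,v)) :
    (A (u-1,v-1) = (u-1,v-1) ∧ A (u,v-1) = (u+1,v-1) ∧ A (u-1,v) = (u,v) ∧ A (u,v) = (u,v)) ∨
    (A (u-1,v-1) = (u-1,v-1) ∧ A (u,v-1) = (u,v) ∧ A (u-1,v) = (u-1,v+1) ∧ A (u,v) = (u,v)) ∨
    (A (u-1,v-1) = (u,v) ∧ A (u,v-1) = (u+1,v-1) ∧ A (u-1,v) = (u,v) ∧ A (u,v) = (u+1,v+1)) ∨
    (A (u-1,v-1) = (u,v) ∧ A (u,v-1) = (u,v) ∧ A (u-1,v) = (u-1,v+1) ∧ A (u,v) = (u+1,v+1)) := by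
  obtain ⟨hLL, hLR, hUL, hUR⟩ := AL4 n u v hT hpar
  obtain ⟨t1, t2⟩ := htr
  dsimp only at t1 t2
  rcases around_LL hA hLL hpar with eLL | eLL
  · have hUR' : A (u,v) = (u,v) := by
      rcases around_UR hA hUR hpar with e | e
      · exact e
      · have := t1.mpr e; rw [eLL] at this
        exact absurd this (by simp [Prod.ext_iff] <;> omega)
    rcases around_LR hA hLR hpar with eLR | eLR
    · have hUL' : A (u-1,v) = (u,v) := by
        rcases around_UL hA hUL hpar with e | e
        · exact e
        · have := t2.mpr e; rw [eLR] at this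
          exact absurd this (by simp [Prod.ext_iff] <;> omega)
      exact Or.inl ⟨eLL, eLR, hUL', hUR'⟩
    · exact Or.inr (Or.inl ⟨eLL, eLR, t2.mp eLR, hUR'⟩)
  · have hUR' : A (u,v) = (u+1,v+1) := t1.mp eLL
    rcases around_LR hA hLR hpar with eLR | eLR
    · have hUL' : A (u-1,v) = (u,v) := by
        rcases around_UL hA hUL hpar with e | e
        · exact e
        · have := t2.mpr e; rw [eLR] at this
          exact absurd this (by simp [Prod.ext_iff] <;> omega)
      exact Or.inr (Or.inr (Or.inl ⟨eLL, eLR, hUL', hUR'⟩))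
    · exact Or.inr (Or.inr (Or.inr ⟨eLL, eLR, t2.mp eLR, hUR'⟩))

lemma square_comp (hA : IsArrowField n A) (u v : ℤ)
    (h1 : aztecCell (n+1) (u-1,v-1)) (h2 : aztecCell (n+1) (u,v-1))
    (h3 : aztecCell (n+1) (u-1,v)) (h4 : aztecCell (n+1) (u,v))
    (e1 : A (u-1,v-1) = (u-1,v-1)) (e2 : A (u,v-1) = (u+1,v-1))
    (e3 : A (u-1,v) = (u-1,v+1)) (e4 : A (u,v) = (u+1,v+1))
    {x : ℝ × ℝ} (hx : x ∈ Set.Ioo ((u:ℝ)-1) ((u:ℝ)+1) ×ˢ Set.Ioo ((v:ℝ)-1) ((v:ℝ)+1)) :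
    connectedComponentIn (aztecRegion (n+1) \ boldLines n A) x =
      Set.Ioo ((u:ℝ)-1) ((u:ℝ)+1) ×ˢ Set.Ioo ((v:ℝ)-1) ((v:ℝ)+1) := by
  have hs : Set.Ioo (((u-1:ℤ)):ℝ) (((u+1:ℤ)):ℝ) ×ˢ Set.Ioo (((v-1:ℤ)):ℝ) (((v+1:ℤ)):ℝ)
      = Set.Ioo ((u:ℝ)-1) ((u:ℝ)+1) ×ˢ Set.Ioo ((v:ℝ)-1) ((v:ℝ)+1) := by
    push_cast; rfl
  have hcell : ∀ a b : ℤ, u-1 ≤ a → a < u+1 → v-1 ≤ b → b < v+1 →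
      aztecCell (n+1) (a,b) := by
    intro a b ha1 ha2 hb1 hb2
    have hab : (a = u-1 ∨ a = u) ∧ (b = v-1 ∨ b = v) := by omega
    rcases hab with ⟨ha | ha, hb | hb⟩ <;> subst ha <;> subst hb <;> assumption
  have hno : ∀ a b : ℤ, aztecCell (n+1) (a,b) →
      (u-1 < a + 1 → a < u+1 → v-1 < (A (a,b)).2 → (A (a,b)).2 < v+1 → False) ∧
      (v-1 < b + 1 → b < v+1 → u-1 < (A (a,b)).1 → (A (a,b)).1 < u+1 → False) := by
    intro a b hcI
    constructor
    · intro p1 p2 p3 p4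
      have hb : b = v-1 ∨ b = v := by rcases head_snd hA hcI with h | h <;> omega
      have ha : a = u-1 ∨ a = u := by omega
      rcases ha with ha | ha <;> rcases hb with hb | hb <;> subst ha <;> subst hb <;>
        [rw [e1] at p3 p4; rw [e3] at p3 p4; rw [e2] at p3 p4; rw [e4] at p3 p4] <;>
        dsimp only at p3 p4 <;> omega
    · intro p1 p2 p3 p4
      have ha : a = u-1 ∨ a = u := by rcases head_fst hA hcI with h | h <;> omega
      have hb : b = v-1 ∨ b = v := by omega
      rcases ha with ha | ha <;> rcases hb with hb | hb <;> subst ha <;> subst hb <;>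
        [rw [e1] at p3 p4; rw [e3] at p3 p4; rw [e2] at p3 p4; rw [e4] at p3 p4] <;>
        dsimp only at p3 p4 <;> omega
  have hL : ∀ b : ℤ, v-1 ≤ b → b < v+1 → ∃ a, aztecCell (n+1) (a,b) ∧ (A (a,b)).1 = u-1 := by
    intro b hb1 hb2
    have hb : b = v-1 ∨ b = v := by omega
    rcases hb with hb | hb <;> subst hb
    · exact ⟨u-1, h1, by rw [e1]⟩
    · exact ⟨u-1, h3, by rw [e3]⟩
  have hR : ∀ b : ℤ, v-1 ≤ b → b < v+1 → ∃ a, aztecCell (n+1) (a,b) ∧ (A (a,b)).1 = u+1 := by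
    intro b hb1 hb2
    have hb : b = v-1 ∨ b = v := by omega
    rcases hb with hb | hb <;> subst hb
    · exact ⟨u, h2, by rw [e2]⟩
    · exact ⟨u, h4, by rw [e4]⟩
  have hD : ∀ a : ℤ, u-1 ≤ a → a < u+1 → ∃ b, aztecCell (n+1) (a,b) ∧ (A (a,b)).2 = v-1 := by
    intro a ha1 ha2
    have ha : a = u-1 ∨ a = u := by omega
    rcases ha with ha | ha <;> subst ha
    · exact ⟨v-1, h1, by rw [e1]⟩
    · exact ⟨v-1, h2, by rw [e2]⟩
  have hU : ∀ a : ℤ, u-1 ≤ a → a < u+1 → ∃ b, aztecCell (n+1) (a,b) ∧ (A (a,b)).2 = v+1 := by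
    intro a ha1 ha2
    have ha : a = u-1 ∨ a = u := by omega
    rcases ha with ha | ha <;> subst ha
    · exact ⟨v, h3, by rw [e3]⟩
    · exact ⟨v, h4, by rw [e4]⟩
  have hx' : x ∈ Set.Ioo (((u-1:ℤ)):ℝ) (((u+1:ℤ)):ℝ) ×ˢ Set.Ioo (((v-1:ℤ)):ℝ) (((v+1:ℤ)):ℝ) := by
    rw [hs]; exact hx
  have key := rect_comp n A (u-1) (u+1) (v-1) (v+1) (by omega) (by omega)
    hcell hno hL hR hD hU hx'
  rw [hs] at key
  exact key

end Shapes
section Dominoes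
open Set

variable {n : ℕ} {A : ℤ × ℤ → ℤ × ℤ}

/-- Horizontal domino with cells `(a,b)`, `(a+1,b)`, arrow heads at `(a,w)`, `(a+2,w)`,
and the two neighbouring cells in row `b'` pointing at `(a+1,m')`. -/
lemma hdom_comp (hA : IsArrowField n A) (a b w b' m' : ℤ)
    (hw : (w = b ∧ b' = b+1 ∧ m' = b+1) ∨ (w = b+1 ∧ b' = b-1 ∧ m' = b))
    (hc0 : aztecCell (n+1) (a,b)) (hc1 : aztecCell (n+1) (a+1,b))
    (hd0 : aztecCell (n+1) (a,b')) (hd1 : aztecCell (n+1) (a+1,b'))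
    (e0 : A (a,b) = (a,w)) (e1 : A (a+1,b) = (a+2,w))
    (f0 : A (a,b') = (a+1,m')) (f1 : A (a+1,b') = (a+1,m'))
    {x : ℝ × ℝ} (hx : x ∈ Set.Ioo (a:ℝ) ((a:ℝ)+2) ×ˢ Set.Ioo (b:ℝ) ((b:ℝ)+1)) :
    connectedComponentIn (aztecRegion (n+1) \ boldLines n A) x =
      Set.Ioo (a:ℝ) ((a:ℝ)+2) ×ˢ Set.Ioo (b:ℝ) ((b:ℝ)+1) := by
  have hs : Set.Ioo ((a:ℤ):ℝ) (((a+2:ℤ)):ℝ) ×ˢ Set.Ioo ((b:ℤ):ℝ) (((b+1:ℤ)):ℝ)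
      = Set.Ioo (a:ℝ) ((a:ℝ)+2) ×ˢ Set.Ioo (b:ℝ) ((b:ℝ)+1) := by
    push_cast; rfl
  have hcell : ∀ α β : ℤ, a ≤ α → α < a+2 → b ≤ β → β < b+1 →
      aztecCell (n+1) (α,β) := by
    intro α β h1 h2 h3 h4
    have : (α = a ∨ α = a+1) ∧ β = b := by omega
    rcases this with ⟨h | h, h'⟩ <;> subst h <;> subst h' <;> assumption
  have hno : ∀ α β : ℤ, aztecCell (n+1) (α,β) →
      (a < α + 1 → α < a+2 → b < (A (α,β)).2 → (A (α,β)).2 < b+1 → False) ∧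
      (b < β + 1 → β < b+1 → a < (A (α,β)).1 → (A (α,β)).1 < a+2 → False) := by
    intro α β hcI
    constructor
    · intro p1 p2 p3 p4; omega
    · intro p1 p2 p3 p4
      have hα : α = a ∨ α = a+1 := by rcases head_fst hA hcI with h | h <;> omega
      have hβ : β = b := by omega
      subst hβ
      rcases hα with h | h <;> subst h <;> [rw [e0] at p3 p4; rw [e1] at p3 p4] <;>
        dsimp only at p3 p4 <;> omega
  have hL : ∀ β : ℤ, b ≤ β → β < b+1 → ∃ α, aztecCell (n+1) (α,β) ∧ (A (α,β)).1 = a := by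
    intro β h1 h2
    have : β = b := by omega
    subst this
    exact ⟨a, hc0, by rw [e0]⟩
  have hR : ∀ β : ℤ, b ≤ β → β < b+1 → ∃ α, aztecCell (n+1) (α,β) ∧ (A (α,β)).1 = a+2 := by
    intro β h1 h2
    have : β = b := by omega
    subst this
    exact ⟨a+1, hc1, by rw [e1]⟩
  have hD : ∀ α : ℤ, a ≤ α → α < a+2 → ∃ β, aztecCell (n+1) (α,β) ∧ (A (α,β)).2 = b := by
    intro α h1 h2
    have hα : α = a ∨ α = a+1 := by omega
    rcases hw with ⟨hw1, hw2, hw3⟩ | ⟨hw1, hw2, hw3⟩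
    · rcases hα with h | h <;> subst h
      · exact ⟨b, hc0, by rw [e0, hw1]⟩
      · exact ⟨b, hc1, by rw [e1, hw1]⟩
    · rcases hα with h | h <;> subst h
      · exact ⟨b', hd0, by rw [f0, hw3]⟩
      · exact ⟨b', hd1, by rw [f1, hw3]⟩
  have hU : ∀ α : ℤ, a ≤ α → α < a+2 → ∃ β, aztecCell (n+1) (α,β) ∧ (A (α,β)).2 = b+1 := by
    intro α h1 h2
    have hα : α = a ∨ α = a+1 := by omega
    rcases hw with ⟨hw1, hw2, hw3⟩ | ⟨hw1, hw2, hw3⟩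
    · rcases hα with h | h <;> subst h
      · exact ⟨b', hd0, by rw [f0, hw3]⟩
      · exact ⟨b', hd1, by rw [f1, hw3]⟩
    · rcases hα with h | h <;> subst h
      · exact ⟨b, hc0, by rw [e0, hw1]⟩
      · exact ⟨b, hc1, by rw [e1, hw1]⟩
  have hx' : x ∈ Set.Ioo ((a:ℤ):ℝ) (((a+2:ℤ)):ℝ) ×ˢ Set.Ioo ((b:ℤ):ℝ) (((b+1:ℤ)):ℝ) := by
    rw [hs]; exact hx
  have key := rect_comp n A a (a+2) b (b+1) (by omega) (by omega) hcell hno hL hR hD hU hx'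
  rw [hs] at key
  exact key

/-- Vertical domino with cells `(a,b)`, `(a,b+1)`, arrow heads at `(h,b)`, `(h,b+2)`,
and the two neighbouring cells in column `a'` pointing at `(g,b+1)`. -/
lemma vdom_comp (hA : IsArrowField n A) (a b h a' g : ℤ)
    (hh : (h = a ∧ a' = a+1 ∧ g = a+1) ∨ (h = a+1 ∧ a' = a-1 ∧ g = a))
    (hc0 : aztecCell (n+1) (a,b)) (hc1 : aztecCell (n+1) (a,b+1))
    (hd0 : aztecCell (n+1) (a',b)) (hd1 : aztecCell (n+1) (a',b+1))
    (e0 : A (a,b) = (h,b)) (e1 : A (a,b+1) = (h,b+2))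
    (f0 : A (a',b) = (g,b+1)) (f1 : A (a',b+1) = (g,b+1))
    {x : ℝ × ℝ} (hx : x ∈ Set.Ioo (a:ℝ) ((a:ℝ)+1) ×ˢ Set.Ioo (b:ℝ) ((b:ℝ)+2)) :
    connectedComponentIn (aztecRegion (n+1) \ boldLines n A) x =
      Set.Ioo (a:ℝ) ((a:ℝ)+1) ×ˢ Set.Ioo (b:ℝ) ((b:ℝ)+2) := by
  have hs : Set.Ioo ((a:ℤ):ℝ) (((a+1:ℤ)):ℝ) ×ˢ Set.Ioo ((b:ℤ):ℝ) (((b+2:ℤ)):ℝ)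
      = Set.Ioo (a:ℝ) ((a:ℝ)+1) ×ˢ Set.Ioo (b:ℝ) ((b:ℝ)+2) := by
    push_cast; rfl
  have hcell : ∀ α β : ℤ, a ≤ α → α < a+1 → b ≤ β → β < b+2 →
      aztecCell (n+1) (α,β) := by
    intro α β h1 h2 h3 h4
    have : α = a ∧ (β = b ∨ β = b+1) := by omega
    rcases this with ⟨h', h'' | h''⟩ <;> subst h' <;> subst h'' <;> assumption
  have hno : ∀ α β : ℤ, aztecCell (n+1) (α,β) →
      (a < α + 1 → α < a+1 → b < (A (α,β)).2 → (A (α,β)).2 < b+2 → False) ∧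
      (b < β + 1 → β < b+2 → a < (A (α,β)).1 → (A (α,β)).1 < a+1 → False) := by
    intro α β hcI
    constructor
    · intro p1 p2 p3 p4
      have hβ : β = b ∨ β = b+1 := by rcases head_snd hA hcI with h' | h' <;> omega
      have hα : α = a := by omega
      subst hα
      rcases hβ with h' | h' <;> subst h' <;> [rw [e0] at p3 p4; rw [e1] at p3 p4] <;>
        dsimp only at p3 p4 <;> omega
    · intro p1 p2 p3 p4; omega
  have hL : ∀ β : ℤ, b ≤ β → β < b+2 → ∃ α, aztecCell (n+1) (α,β) ∧ (A (α,β)).1 = a := by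
    intro β h1 h2
    have hβ : β = b ∨ β = b+1 := by omega
    rcases hh with ⟨hh1, hh2, hh3⟩ | ⟨hh1, hh2, hh3⟩
    · rcases hβ with h' | h' <;> subst h'
      · exact ⟨a, hc0, by rw [e0, hh1]⟩
      · exact ⟨a, hc1, by rw [e1, hh1]⟩
    · rcases hβ with h' | h' <;> subst h'
      · exact ⟨a', hd0, by rw [f0, hh3]⟩
      · exact ⟨a', hd1, by rw [f1, hh3]⟩
  have hR : ∀ β : ℤ, b ≤ β → β < b+2 → ∃ α, aztecCell (n+1) (α,β) ∧ (A (α,β)).1 = a+1 := by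
    intro β h1 h2
    have hβ : β = b ∨ β = b+1 := by omega
    rcases hh with ⟨hh1, hh2, hh3⟩ | ⟨hh1, hh2, hh3⟩
    · rcases hβ with h' | h' <;> subst h'
      · exact ⟨a', hd0, by rw [f0, hh3]⟩
      · exact ⟨a', hd1, by rw [f1, hh3]⟩
    · rcases hβ with h' | h' <;> subst h'
      · exact ⟨a, hc0, by rw [e0, hh1]⟩
      · exact ⟨a, hc1, by rw [e1, hh1]⟩
  have hD : ∀ α : ℤ, a ≤ α → α < a+1 → ∃ β, aztecCell (n+1) (α,β) ∧ (A (α,β)).2 = b := by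
    intro α h1 h2
    have : α = a := by omega
    subst this
    exact ⟨b, hc0, by rw [e0]⟩
  have hU : ∀ α : ℤ, a ≤ α → α < a+1 → ∃ β, aztecCell (n+1) (α,β) ∧ (A (α,β)).2 = b+2 := by
    intro α h1 h2
    have : α = a := by omega
    subst this
    exact ⟨b+1, hc1, by rw [e1]⟩
  have hx' : x ∈ Set.Ioo ((a:ℤ):ℝ) (((a+1:ℤ)):ℝ) ×ˢ Set.Ioo ((b:ℤ):ℝ) (((b+2:ℤ)):ℝ) := by
    rw [hs]; exact hx
  have key := rect_comp n A a (a+1) b (b+2) (by omega) (by omega) hcell hno hL hR hD hU hx'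
  rw [hs] at key
  exact key

end Dominoes
section Driver
open Set

variable {n : ℕ} {A : ℤ × ℤ → ℤ × ℤ}

/-- The conclusion of the classification, for a point `x`. -/
def Concl (n : ℕ) (A : ℤ × ℤ → ℤ × ℤ) (x : ℝ × ℝ) : Prop :=
  ∃ k l : ℤ,
    connectedComponentIn (aztecRegion (n + 1) \ boldLines n A) x =
        Set.Ioo (k : ℝ) (k + 2) ×ˢ Set.Ioo (l : ℝ) (l + 1) ∨
    connectedComponentIn (aztecRegion (n + 1) \ boldLines n A) x =
        Set.Ioo (k : ℝ) (k + 1) ×ˢ Set.Ioo (l : ℝ) (l + 2) ∨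
    (connectedComponentIn (aztecRegion (n + 1) \ boldLines n A) x =
        Set.Ioo ((k : ℝ) - 1) (k + 1) ×ˢ Set.Ioo ((l : ℝ) - 1) (l + 1) ∧
      InteriorNode n (k, l) ∧ Repelling A (k, l))

lemma interior_case (hA : IsArrowField n A) (hout : Outward n A) (hn : 1 ≤ n)
    {a b : ℤ} (hc : aztecCell (n+1) (a,b)) {x : ℝ × ℝ}
    (hx1 : (a:ℝ) < x.1) (hx2 : x.1 < a+1) (hx3 : (b:ℝ) < x.2) (hx4 : x.2 < b+1) :
    Concl n A x := by
  have h11 : (1:ℤ) + 1 = 2 := by norm_num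
  rcases head_cases hA hc with ⟨hp, h | h⟩ | ⟨hp, h | h⟩
  · -- head (a,b), tail T = (a+1,b+1); our cell is LL of T
    have hTint : aztecPoint n (a+1,b+1) :=
      tail_interior hout hn a b (a+1) (b+1) hc (Or.inr rfl) (Or.inr rfl)
        (by rw [h]; simp [Prod.ext_iff] <;> omega)
    have hparT : ((a+1) + (b+1) - (n:ℤ)) % 2 = 0 := by omega
    obtain ⟨q1, q2, q3, q4⟩ := AL4 n (a+1) (b+1) hTint hparT
    have r1 := q1; have r2 := q2; have r3 := q3; have r4 := q4
    simp only [Int.add_sub_cancel] at r1 r2 r3 r4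
    rcases node_cases hA hTint hparT with hatt | hrep | htr
    · exfalso
      have h1 := hatt.1
      simp only [Int.add_sub_cancel] at h1
      rw [h] at h1
      exact absurd h1 (by simp [Prod.ext_iff] <;> omega)
    · refine ⟨a+1, b+1, Or.inr (Or.inr ⟨?_, ⟨⟨AL7 n _ _ hTint, hparT⟩, hTint⟩, hrep⟩)⟩
      exact square_comp hA (a+1) (b+1) q1 q2 q3 q4 hrep.1 hrep.2.1 hrep.2.2.1 hrep.2.2.2
        (by refine ⟨⟨?_, ?_⟩, ?_, ?_⟩ <;> push_cast <;> linarith)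
    · have cfg := transient_config hA hTint hparT htr
      simp only [Int.add_sub_cancel, add_assoc, h11] at cfg
      rcases cfg with ⟨c1, c2, c3, c4⟩ | ⟨c1, c2, c3, c4⟩ | ⟨c1, c2, c3, c4⟩ | ⟨c1, c2, c3, c4⟩
      · -- away LL, LR : horizontal domino (a,b),(a+1,b)
        refine ⟨a, b, Or.inl ?_⟩
        exact hdom_comp hA a b b (b+1) (b+1) (Or.inl ⟨rfl, rfl, rfl⟩) hc r2 r3 r4
          c1 c2 c3 c4 (by refine ⟨⟨?_, ?_⟩, ?_, ?_⟩ <;> push_cast <;> linarith)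
      · -- away LL, UL : vertical domino (a,b),(a,b+1)
        refine ⟨a, b, Or.inr (Or.inl ?_)⟩
        exact vdom_comp hA a b a (a+1) (a+1) (Or.inl ⟨rfl, rfl, rfl⟩) hc r3 r2 r4
          c1 c3 c2 c4 (by refine ⟨⟨?_, ?_⟩, ?_, ?_⟩ <;> push_cast <;> linarith)
      · exfalso; rw [h] at c1; exact absurd c1 (by simp [Prod.ext_iff] <;> omega)
      · exfalso; rw [h] at c1; exact absurd c1 (by simp [Prod.ext_iff] <;> omega)
  · -- head (a+1,b+1), tail T = (a,b); our cell is UR of T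
    have hTint : aztecPoint n (a,b) :=
      tail_interior hout hn a b a b hc (Or.inl rfl) (Or.inl rfl)
        (by rw [h]; simp [Prod.ext_iff] <;> omega)
    have hparT : (a + b - (n:ℤ)) % 2 = 0 := hp
    obtain ⟨q1, q2, q3, q4⟩ := AL4 n a b hTint hparT
    have r1 := q1; have r2 := q2; have r3 := q3; have r4 := q4
    rcases node_cases hA hTint hparT with hatt | hrep | htr
    · exfalso
      have h1 := hatt.2.2.2
      rw [h] at h1
      exact absurd h1 (by simp [Prod.ext_iff] <;> omega)
    · refine ⟨a, b, Or.inr (Or.inr ⟨?_, ⟨⟨AL7 n _ _ hTint, hparT⟩, hTint⟩, hrep⟩)⟩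
      exact square_comp hA a b q1 q2 q3 q4 hrep.1 hrep.2.1 hrep.2.2.1 hrep.2.2.2
        (by refine ⟨⟨?_, ?_⟩, ?_, ?_⟩ <;> push_cast <;> linarith)
    · have cfg := transient_config hA hTint hparT htr
      rcases cfg with ⟨c1, c2, c3, c4⟩ | ⟨c1, c2, c3, c4⟩ | ⟨c1, c2, c3, c4⟩ | ⟨c1, c2, c3, c4⟩
      · exfalso; rw [h] at c4; exact absurd c4 (by simp [Prod.ext_iff] <;> omega)
      · exfalso; rw [h] at c4; exact absurd c4 (by simp [Prod.ext_iff] <;> omega)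
      · -- away UR, LR : vertical domino (a,b-1),(a,b)
        refine ⟨a, b-1, Or.inr (Or.inl ?_)⟩
        have e1' : A (a, (b-1)+1) = (a+1, (b-1)+2) := by
          have : ((b-1)+1 : ℤ) = b := by ring
          rw [this, h]; simp [Prod.ext_iff] <;> omega
        have hc1' : aztecCell (n+1) (a, (b-1)+1) := by
          have : ((b-1)+1 : ℤ) = b := by ring
          rw [this]; exact hc
        have hd1' : aztecCell (n+1) (a-1, (b-1)+1) := by
          have : ((b-1)+1 : ℤ) = b := by ring
          rw [this]; exact r3
        have f1' : A (a-1, (b-1)+1) = (a, (b-1)+1) := by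
          have : ((b-1)+1 : ℤ) = b := by ring
          rw [this]; exact c3
        have f0' : A (a-1, b-1) = (a, (b-1)+1) := by
          have : ((b-1)+1 : ℤ) = b := by ring
          rw [this]; exact c1
        exact vdom_comp hA a (b-1) (a+1) (a-1) a (Or.inr ⟨rfl, rfl, rfl⟩) r2 hc1' r1 hd1'
          c2 e1' f0' f1' (by refine ⟨⟨?_, ?_⟩, ?_, ?_⟩ <;> push_cast <;> linarith)
      · -- away UR, UL : horizontal domino (a-1,b),(a,b)
        refine ⟨a-1, b, Or.inl ?_⟩
        have e1' : A ((a-1)+1, b) = ((a-1)+2, b+1) := by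
          have h2 : ((a-1)+1 : ℤ) = a := by ring
          have h3 : ((a-1)+2 : ℤ) = a+1 := by ring
          rw [h2, h3, h]
        have hc1' : aztecCell (n+1) ((a-1)+1, b) := by
          have h2 : ((a-1)+1 : ℤ) = a := by ring
          rw [h2]; exact hc
        have hd1' : aztecCell (n+1) ((a-1)+1, b-1) := by
          have h2 : ((a-1)+1 : ℤ) = a := by ring
          rw [h2]; exact r2
        have f1' : A ((a-1)+1, b-1) = ((a-1)+1, b) := by
          have h2 : ((a-1)+1 : ℤ) = a := by ring
          rw [h2]; exact c2
        have f0' : A (a-1, b-1) = ((a-1)+1, b) := by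
          have h2 : ((a-1)+1 : ℤ) = a := by ring
          rw [h2]; exact c1
        exact hdom_comp hA (a-1) b (b+1) (b-1) b (Or.inr ⟨rfl, rfl, rfl⟩) r3 hc1' r1 hd1'
          c3 e1' f0' f1' (by refine ⟨⟨?_, ?_⟩, ?_, ?_⟩ <;> push_cast <;> linarith)
  · -- head (a+1,b), tail T = (a,b+1); our cell is LR of T
    have hTint : aztecPoint n (a,b+1) :=
      tail_interior hout hn a b a (b+1) hc (Or.inl rfl) (Or.inr rfl)
        (by rw [h]; simp [Prod.ext_iff] <;> omega)
    have hparT : (a + (b+1) - (n:ℤ)) % 2 = 0 := by omega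
    obtain ⟨q1, q2, q3, q4⟩ := AL4 n a (b+1) hTint hparT
    have r1 := q1; have r2 := q2; have r3 := q3; have r4 := q4
    simp only [Int.add_sub_cancel] at r1 r2 r3 r4
    rcases node_cases hA hTint hparT with hatt | hrep | htr
    · exfalso
      have h1 := hatt.2.1
      simp only [Int.add_sub_cancel] at h1
      rw [h] at h1
      exact absurd h1 (by simp [Prod.ext_iff] <;> omega)
    · refine ⟨a, b+1, Or.inr (Or.inr ⟨?_, ⟨⟨AL7 n _ _ hTint, hparT⟩, hTint⟩, hrep⟩)⟩
      exact square_comp hA a (b+1) q1 q2 q3 q4 hrep.1 hrep.2.1 hrep.2.2.1 hrep.2.2.2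
        (by refine ⟨⟨?_, ?_⟩, ?_, ?_⟩ <;> push_cast <;> linarith)
    · have cfg := transient_config hA hTint hparT htr
      simp only [Int.add_sub_cancel, add_assoc, h11] at cfg
      rcases cfg with ⟨c1, c2, c3, c4⟩ | ⟨c1, c2, c3, c4⟩ | ⟨c1, c2, c3, c4⟩ | ⟨c1, c2, c3, c4⟩
      · -- away LL, LR : horizontal domino (a-1,b),(a,b)
        refine ⟨a-1, b, Or.inl ?_⟩
        have e1' : A ((a-1)+1, b) = ((a-1)+2, b) := by
          have h2 : ((a-1)+1 : ℤ) = a := by ring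
          have h3 : ((a-1)+2 : ℤ) = a+1 := by ring
          rw [h2, h3]; exact c2
        have hc1' : aztecCell (n+1) ((a-1)+1, b) := by
          have h2 : ((a-1)+1 : ℤ) = a := by ring
          rw [h2]; exact hc
        have hd1' : aztecCell (n+1) ((a-1)+1, b+1) := by
          have h2 : ((a-1)+1 : ℤ) = a := by ring
          rw [h2]; exact r4
        have f1' : A ((a-1)+1, b+1) = ((a-1)+1, b+1) := by
          have h2 : ((a-1)+1 : ℤ) = a := by ring
          rw [h2]; exact c4
        have f0' : A (a-1, b+1) = ((a-1)+1, b+1) := by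
          have h2 : ((a-1)+1 : ℤ) = a := by ring
          rw [h2]; exact c3
        exact hdom_comp hA (a-1) b b (b+1) (b+1) (Or.inl ⟨rfl, rfl, rfl⟩) r1 hc1' r3 hd1'
          c1 e1' f0' f1' (by refine ⟨⟨?_, ?_⟩, ?_, ?_⟩ <;> push_cast <;> linarith)
      · exfalso; rw [h] at c2; exact absurd c2 (by simp [Prod.ext_iff] <;> omega)
      · -- away UR, LR : vertical domino (a,b),(a,b+1)
        refine ⟨a, b, Or.inr (Or.inl ?_)⟩
        exact vdom_comp hA a b (a+1) (a-1) a (Or.inr ⟨rfl, rfl, rfl⟩) hc r4 r1 r3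
          c2 c4 c1 c3 (by refine ⟨⟨?_, ?_⟩, ?_, ?_⟩ <;> push_cast <;> linarith)
      · exfalso; rw [h] at c2; exact absurd c2 (by simp [Prod.ext_iff] <;> omega)
  · -- head (a,b+1), tail T = (a+1,b); our cell is UL of T
    have hTint : aztecPoint n (a+1,b) :=
      tail_interior hout hn a b (a+1) b hc (Or.inr rfl) (Or.inl rfl)
        (by rw [h]; simp [Prod.ext_iff] <;> omega)
    have hparT : ((a+1) + b - (n:ℤ)) % 2 = 0 := by omega
    obtain ⟨q1, q2, q3, q4⟩ := AL4 n (a+1) b hTint hparT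
    have r1 := q1; have r2 := q2; have r3 := q3; have r4 := q4
    simp only [Int.add_sub_cancel] at r1 r2 r3 r4
    rcases node_cases hA hTint hparT with hatt | hrep | htr
    · exfalso
      have h1 := hatt.2.2.1
      simp only [Int.add_sub_cancel] at h1
      rw [h] at h1
      exact absurd h1 (by simp [Prod.ext_iff] <;> omega)
    · refine ⟨a+1, b, Or.inr (Or.inr ⟨?_, ⟨⟨AL7 n _ _ hTint, hparT⟩, hTint⟩, hrep⟩)⟩
      exact square_comp hA (a+1) b q1 q2 q3 q4 hrep.1 hrep.2.1 hrep.2.2.1 hrep.2.2.2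
        (by refine ⟨⟨?_, ?_⟩, ?_, ?_⟩ <;> push_cast <;> linarith)
    · have cfg := transient_config hA hTint hparT htr
      simp only [Int.add_sub_cancel, add_assoc, h11] at cfg
      rcases cfg with ⟨c1, c2, c3, c4⟩ | ⟨c1, c2, c3, c4⟩ | ⟨c1, c2, c3, c4⟩ | ⟨c1, c2, c3, c4⟩
      · exfalso; rw [h] at c3; exact absurd c3 (by simp [Prod.ext_iff] <;> omega)
      · -- away LL, UL : vertical domino (a,b-1),(a,b)
        refine ⟨a, b-1, Or.inr (Or.inl ?_)⟩
        have e1' : A (a, (b-1)+1) = (a, (b-1)+2) := by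
          have h2 : ((b-1)+1 : ℤ) = b := by ring
          have h3 : ((b-1)+2 : ℤ) = b+1 := by ring
          rw [h2, h3]; exact h
        have hc1' : aztecCell (n+1) (a, (b-1)+1) := by
          have h2 : ((b-1)+1 : ℤ) = b := by ring
          rw [h2]; exact hc
        have hd1' : aztecCell (n+1) (a+1, (b-1)+1) := by
          have h2 : ((b-1)+1 : ℤ) = b := by ring
          rw [h2]; exact r4
        have f1' : A (a+1, (b-1)+1) = (a+1, (b-1)+1) := by
          have h2 : ((b-1)+1 : ℤ) = b := by ring
          rw [h2]; exact c4
        have f0' : A (a+1, b-1) = (a+1, (b-1)+1) := by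
          have h2 : ((b-1)+1 : ℤ) = b := by ring
          rw [h2]; exact c2
        exact vdom_comp hA a (b-1) a (a+1) (a+1) (Or.inl ⟨rfl, rfl, rfl⟩) r1 hc1' r2 hd1'
          c1 e1' f0' f1' (by refine ⟨⟨?_, ?_⟩, ?_, ?_⟩ <;> push_cast <;> linarith)
      · exfalso; rw [h] at c3; exact absurd c3 (by simp [Prod.ext_iff] <;> omega)
      · -- away UR, UL : horizontal domino (a,b),(a+1,b)
        refine ⟨a, b, Or.inl ?_⟩
        exact hdom_comp hA a b (b+1) (b-1) b (Or.inr ⟨rfl, rfl, rfl⟩) hc r4 r1 r2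
          h c4 c1 c2 (by refine ⟨⟨?_, ?_⟩, ?_, ?_⟩ <;> push_cast <;> linarith)

end Driver
section Edges
open Set

variable {n : ℕ} {A : ℤ × ℤ → ℤ × ℤ}

lemma vedge_case (hA : IsArrowField n A) (hout : Outward n A) (hn : 1 ≤ n)
    (α β : ℤ) {x : ℝ × ℝ} (hxB : x ∉ boldLines n A)
    (hx0 : x.1 = (α:ℝ)) (hx3 : (β:ℝ) < x.2) (hx4 : x.2 < β+1)
    (hcell : aztecCell (n+1) (α-1,β) ∨ aztecCell (n+1) (α,β)) : Concl n A x := by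
  have h11 : (1:ℤ) + 1 = 2 := by norm_num
  -- both side cells are in the region
  have hboth : aztecCell (n+1) (α-1,β) ∧ aztecCell (n+1) (α,β) := by
    rcases hcell with hcL | hcR
    · refine ⟨hcL, ?_⟩
      by_contra hno
      have hm : ¬ aztecCell (n+1) (α-1+1, β) := by
        rw [show (α-1+1 : ℤ) = α from by ring]; exact hno
      have hA1 : (A (α-1,β)).1 = α := by
        have := bnd_right hA hout hn hcL hm; omega
      exact hxB (mem_boldLines.2 ⟨(α-1,β), hcL,
        Or.inr ⟨by rw [hA1, hx0], by push_cast; linarith, by push_cast; linarith⟩⟩)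
    · refine ⟨?_, hcR⟩
      by_contra hno
      have hA1 : (A (α,β)).1 = α := bnd_left hA hout hn hcR hno
      exact hxB (mem_boldLines.2 ⟨(α,β), hcR,
        Or.inr ⟨by rw [hA1, hx0], by push_cast; linarith, by push_cast; linarith⟩⟩)
  obtain ⟨hcL, hcR⟩ := hboth
  -- the shared edge is not bold
  have hL1 : (A (α-1,β)).1 = α-1 := by
    rcases head_fst hA hcL with h' | h'
    · exact h'
    · exfalso
      refine hxB (mem_boldLines.2 ⟨(α-1,β), hcL, Or.inr ⟨?_, by push_cast; linarith,
        by push_cast; linarith⟩⟩)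
      rw [h', hx0]; push_cast; ring
  have hR1 : (A (α,β)).1 = α+1 := by
    rcases head_fst hA hcR with h' | h'
    · exfalso
      refine hxB (mem_boldLines.2 ⟨(α,β), hcR, Or.inr ⟨?_, by push_cast; linarith,
        by push_cast; linarith⟩⟩)
      rw [h', hx0]
    · exact h'
  by_cases hpar : (α + β - (n:ℤ)) % 2 = 0
  · -- node T = (α, β); cells are UL and UR of T
    have eUL : A (α-1,β) = (α-1,β+1) := by
      rcases around_UL hA (by rwa [] : aztecCell (n+1) (α-1,β)) hpar with h' | h'
      · exfalso; rw [h'] at hL1; dsimp only at hL1; omega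
      · exact h'
    have eUR : A (α,β) = (α+1,β+1) := by
      rcases around_UR hA hcR hpar with h' | h'
      · exfalso; rw [h'] at hR1; dsimp only at hR1; omega
      · exact h'
    have hTint : aztecPoint n (α,β) :=
      tail_interior hout hn α β α β hcR (Or.inl rfl) (Or.inl rfl)
        (by rw [eUR]; simp [Prod.ext_iff] <;> omega)
    obtain ⟨q1, q2, q3, q4⟩ := AL4 n α β hTint hpar
    have r1 := q1; have r2 := q2; have r3 := q3; have r4 := q4
    rcases node_cases hA hTint hpar with hatt | hrep | htr
    · exfalso
      have h1 := hatt.2.2.2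
      rw [eUR] at h1
      exact absurd h1 (by simp [Prod.ext_iff] <;> omega)
    · refine ⟨α, β, Or.inr (Or.inr ⟨?_, ⟨⟨AL7 n _ _ hTint, hpar⟩, hTint⟩, hrep⟩)⟩
      exact square_comp hA α β q1 q2 q3 q4 hrep.1 hrep.2.1 hrep.2.2.1 hrep.2.2.2
        (by refine ⟨⟨?_, ?_⟩, ?_, ?_⟩ <;> (try rw [hx0]) <;> push_cast <;> linarith)
    · have cfg := transient_config hA hTint hpar htr
      rcases cfg with ⟨c1, c2, c3, c4⟩ | ⟨c1, c2, c3, c4⟩ | ⟨c1, c2, c3, c4⟩ | ⟨c1, c2, c3, c4⟩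
      · exfalso; rw [eUL] at c3; exact absurd c3 (by simp [Prod.ext_iff] <;> omega)
      · exfalso; rw [eUR] at c4; exact absurd c4 (by simp [Prod.ext_iff] <;> omega)
      · exfalso; rw [eUL] at c3; exact absurd c3 (by simp [Prod.ext_iff] <;> omega)
      · -- away UR, UL : horizontal domino (α-1,β),(α,β)
        refine ⟨α-1, β, Or.inl ?_⟩
        have e1' : A ((α-1)+1, β) = ((α-1)+2, β+1) := by
          rw [show ((α-1)+1 : ℤ) = α from by ring, show ((α-1)+2 : ℤ) = α+1 from by ring]
          exact c4
        have hc1' : aztecCell (n+1) ((α-1)+1, β) := by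
          rw [show ((α-1)+1 : ℤ) = α from by ring]; exact hcR
        have hd1' : aztecCell (n+1) ((α-1)+1, β-1) := by
          rw [show ((α-1)+1 : ℤ) = α from by ring]; exact r2
        have f0' : A (α-1, β-1) = ((α-1)+1, β) := by
          rw [show ((α-1)+1 : ℤ) = α from by ring]; exact c1
        have f1' : A ((α-1)+1, β-1) = ((α-1)+1, β) := by
          rw [show ((α-1)+1 : ℤ) = α from by ring]; exact c2
        exact hdom_comp hA (α-1) β (β+1) (β-1) β (Or.inr ⟨rfl, rfl, rfl⟩) r3 hc1' r1 hd1'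
          c3 e1' f0' f1' (by refine ⟨⟨?_, ?_⟩, ?_, ?_⟩ <;> (try rw [hx0]) <;> push_cast <;> linarith)
  · -- node T = (α, β+1); cells are LL and LR of T
    have hpar' : (α + (β+1) - (n:ℤ)) % 2 = 0 := by omega
    have eLL : A (α-1,β) = (α-1,β) := by
      have hLL : aztecCell (n+1) (α-1, (β+1)-1) := by
        rw [show ((β+1)-1 : ℤ) = β from by ring]; exact hcL
      rcases around_LL hA hLL hpar' with h' | h'
      · rw [show ((β+1)-1 : ℤ) = β from by ring] at h'; exact h'
      · exfalso
        rw [show ((β+1)-1 : ℤ) = β from by ring] at h'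
        rw [h'] at hL1; dsimp only at hL1; omega
    have eLR : A (α,β) = (α+1,β) := by
      have hLR : aztecCell (n+1) (α, (β+1)-1) := by
        rw [show ((β+1)-1 : ℤ) = β from by ring]; exact hcR
      rcases around_LR hA hLR hpar' with h' | h'
      · rw [show ((β+1)-1 : ℤ) = β from by ring] at h'
        exact h'
      · exfalso
        rw [show ((β+1)-1 : ℤ) = β from by ring] at h'
        rw [h'] at hR1; dsimp only at hR1; omega
    have hTint : aztecPoint n (α,β+1) :=
      tail_interior hout hn α β α (β+1) hcR (Or.inl rfl) (Or.inr rfl)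
        (by rw [eLR]; simp [Prod.ext_iff] <;> omega)
    obtain ⟨q1, q2, q3, q4⟩ := AL4 n α (β+1) hTint hpar'
    have r1 := q1; have r2 := q2; have r3 := q3; have r4 := q4
    simp only [Int.add_sub_cancel, add_assoc, h11] at r1 r2 r3 r4
    rcases node_cases hA hTint hpar' with hatt | hrep | htr
    · exfalso
      have h1 := hatt.2.1
      simp only [Int.add_sub_cancel] at h1
      rw [eLR] at h1
      exact absurd h1 (by simp [Prod.ext_iff] <;> omega)
    · refine ⟨α, β+1, Or.inr (Or.inr ⟨?_, ⟨⟨AL7 n _ _ hTint, hpar'⟩, hTint⟩, hrep⟩)⟩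
      exact square_comp hA α (β+1) q1 q2 q3 q4 hrep.1 hrep.2.1 hrep.2.2.1 hrep.2.2.2
        (by refine ⟨⟨?_, ?_⟩, ?_, ?_⟩ <;> (try rw [hx0]) <;> push_cast <;> linarith)
    · have cfg := transient_config hA hTint hpar' htr
      simp only [Int.add_sub_cancel, add_assoc, h11] at cfg
      rcases cfg with ⟨c1, c2, c3, c4⟩ | ⟨c1, c2, c3, c4⟩ | ⟨c1, c2, c3, c4⟩ | ⟨c1, c2, c3, c4⟩
      · -- away LL, LR : horizontal domino (α-1,β),(α,β)
        refine ⟨α-1, β, Or.inl ?_⟩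
        have e1' : A ((α-1)+1, β) = ((α-1)+2, β) := by
          rw [show ((α-1)+1 : ℤ) = α from by ring, show ((α-1)+2 : ℤ) = α+1 from by ring]
          exact c2
        have hc1' : aztecCell (n+1) ((α-1)+1, β) := by
          rw [show ((α-1)+1 : ℤ) = α from by ring]; exact hcR
        have hd1' : aztecCell (n+1) ((α-1)+1, β+1) := by
          rw [show ((α-1)+1 : ℤ) = α from by ring]; exact r4
        have f0' : A (α-1, β+1) = ((α-1)+1, β+1) := by
          rw [show ((α-1)+1 : ℤ) = α from by ring]; exact c3
        have f1' : A ((α-1)+1, β+1) = ((α-1)+1, β+1) := by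
          rw [show ((α-1)+1 : ℤ) = α from by ring]; exact c4
        exact hdom_comp hA (α-1) β β (β+1) (β+1) (Or.inl ⟨rfl, rfl, rfl⟩) r1 hc1' r3 hd1'
          c1 e1' f0' f1' (by refine ⟨⟨?_, ?_⟩, ?_, ?_⟩ <;> (try rw [hx0]) <;> push_cast <;> linarith)
      · exfalso; rw [eLR] at c2; exact absurd c2 (by simp [Prod.ext_iff] <;> omega)
      · exfalso; rw [eLL] at c1; exact absurd c1 (by simp [Prod.ext_iff] <;> omega)
      · exfalso; rw [eLL] at c1; exact absurd c1 (by simp [Prod.ext_iff] <;> omega)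

end Edges
section Edges2
open Set

variable {n : ℕ} {A : ℤ × ℤ → ℤ × ℤ}

lemma hedge_case (hA : IsArrowField n A) (hout : Outward n A) (hn : 1 ≤ n)
    (α β : ℤ) {x : ℝ × ℝ} (hxB : x ∉ boldLines n A)
    (hx0 : x.2 = (β:ℝ)) (hx1 : (α:ℝ) < x.1) (hx2 : x.1 < α+1)
    (hcell : aztecCell (n+1) (α,β-1) ∨ aztecCell (n+1) (α,β)) : Concl n A x := by
  have h11 : (1:ℤ) + 1 = 2 := by norm_num
  have hboth : aztecCell (n+1) (α,β-1) ∧ aztecCell (n+1) (α,β) := by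
    rcases hcell with hcD | hcU
    · refine ⟨hcD, ?_⟩
      by_contra hno
      have hm : ¬ aztecCell (n+1) (α, β-1+1) := by
        rw [show (β-1+1 : ℤ) = β from by ring]; exact hno
      have hA2 : (A (α,β-1)).2 = β := by
        have := bnd_up hA hout hn hcD hm; omega
      exact hxB (mem_boldLines.2 ⟨(α,β-1), hcD,
        Or.inl ⟨by push_cast; linarith, by push_cast; linarith, by rw [hA2, hx0]⟩⟩)
    · refine ⟨?_, hcU⟩
      by_contra hno
      have hA2 : (A (α,β)).2 = β := bnd_down hA hout hn hcU hno
      exact hxB (mem_boldLines.2 ⟨(α,β), hcU,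
        Or.inl ⟨by push_cast; linarith, by push_cast; linarith, by rw [hA2, hx0]⟩⟩)
  obtain ⟨hcD, hcU⟩ := hboth
  have hD2 : (A (α,β-1)).2 = β-1 := by
    rcases head_snd hA hcD with h' | h'
    · exact h'
    · exfalso
      refine hxB (mem_boldLines.2 ⟨(α,β-1), hcD, Or.inl ⟨by push_cast; linarith,
        by push_cast; linarith, ?_⟩⟩)
      rw [h', hx0]; push_cast; ring
  have hU2 : (A (α,β)).2 = β+1 := by
    rcases head_snd hA hcU with h' | h'
    · exfalso
      refine hxB (mem_boldLines.2 ⟨(α,β), hcU, Or.inl ⟨by push_cast; linarith,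
        by push_cast; linarith, ?_⟩⟩)
      rw [h', hx0]
    · exact h'
  by_cases hpar : (α + β - (n:ℤ)) % 2 = 0
  · -- node T = (α, β); cells are LR (below) and UR (above) of T
    have eLR : A (α,β-1) = (α+1,β-1) := by
      rcases around_LR hA (by rwa [] : aztecCell (n+1) (α,β-1)) hpar with h' | h'
      · exact h'
      · exfalso; rw [h'] at hD2; dsimp only at hD2; omega
    have eUR : A (α,β) = (α+1,β+1) := by
      rcases around_UR hA hcU hpar with h' | h'
      · exfalso; rw [h'] at hU2; dsimp only at hU2; omega
      · exact h'
    have hTint : aztecPoint n (α,β) :=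
      tail_interior hout hn α β α β hcU (Or.inl rfl) (Or.inl rfl)
        (by rw [eUR]; simp [Prod.ext_iff] <;> omega)
    obtain ⟨q1, q2, q3, q4⟩ := AL4 n α β hTint hpar
    have r1 := q1; have r2 := q2; have r3 := q3; have r4 := q4
    rcases node_cases hA hTint hpar with hatt | hrep | htr
    · exfalso
      have h1 := hatt.2.2.2
      rw [eUR] at h1
      exact absurd h1 (by simp [Prod.ext_iff] <;> omega)
    · refine ⟨α, β, Or.inr (Or.inr ⟨?_, ⟨⟨AL7 n _ _ hTint, hpar⟩, hTint⟩, hrep⟩)⟩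
      exact square_comp hA α β q1 q2 q3 q4 hrep.1 hrep.2.1 hrep.2.2.1 hrep.2.2.2
        (by refine ⟨⟨?_, ?_⟩, ?_, ?_⟩ <;> (try rw [hx0]) <;> push_cast <;> linarith)
    · have cfg := transient_config hA hTint hpar htr
      rcases cfg with ⟨c1, c2, c3, c4⟩ | ⟨c1, c2, c3, c4⟩ | ⟨c1, c2, c3, c4⟩ | ⟨c1, c2, c3, c4⟩
      · exfalso; rw [eUR] at c4; exact absurd c4 (by simp [Prod.ext_iff] <;> omega)
      · exfalso; rw [eUR] at c4; exact absurd c4 (by simp [Prod.ext_iff] <;> omega)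
      · -- away UR, LR : vertical domino (α,β-1),(α,β)
        refine ⟨α, β-1, Or.inr (Or.inl ?_)⟩
        have e1' : A (α, (β-1)+1) = (α+1, (β-1)+2) := by
          rw [show ((β-1)+1 : ℤ) = β from by ring, show ((β-1)+2 : ℤ) = β+1 from by ring]
          exact c4
        have hc1' : aztecCell (n+1) (α, (β-1)+1) := by
          rw [show ((β-1)+1 : ℤ) = β from by ring]; exact hcU
        have hd1' : aztecCell (n+1) (α-1, (β-1)+1) := by
          rw [show ((β-1)+1 : ℤ) = β from by ring]; exact r3
        have f0' : A (α-1, β-1) = (α, (β-1)+1) := by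
          rw [show ((β-1)+1 : ℤ) = β from by ring]; exact c1
        have f1' : A (α-1, (β-1)+1) = (α, (β-1)+1) := by
          rw [show ((β-1)+1 : ℤ) = β from by ring]; exact c3
        exact vdom_comp hA α (β-1) (α+1) (α-1) α (Or.inr ⟨rfl, rfl, rfl⟩) r2 hc1' r1 hd1'
          c2 e1' f0' f1' (by refine ⟨⟨?_, ?_⟩, ?_, ?_⟩ <;> (try rw [hx0]) <;> push_cast <;> linarith)
      · exfalso; rw [eLR] at c2; exact absurd c2 (by simp [Prod.ext_iff] <;> omega)
  · -- node T = (α+1, β); cells are LL (below) and UL (above) of T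
    have hpar' : ((α+1) + β - (n:ℤ)) % 2 = 0 := by omega
    have eLL : A (α,β-1) = (α,β-1) := by
      have hLL : aztecCell (n+1) ((α+1)-1, β-1) := by
        rw [show ((α+1)-1 : ℤ) = α from by ring]; exact hcD
      rcases around_LL hA hLL hpar' with h' | h'
      · rw [show ((α+1)-1 : ℤ) = α from by ring] at h'
        exact h'
      · exfalso
        rw [show ((α+1)-1 : ℤ) = α from by ring] at h'
        rw [h'] at hD2; dsimp only at hD2; omega
    have eUL : A (α,β) = (α,β+1) := by
      have hUL : aztecCell (n+1) ((α+1)-1, β) := by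
        rw [show ((α+1)-1 : ℤ) = α from by ring]; exact hcU
      rcases around_UL hA hUL hpar' with h' | h'
      · exfalso
        rw [show ((α+1)-1 : ℤ) = α from by ring] at h'
        rw [h'] at hU2; dsimp only at hU2; omega
      · rw [show ((α+1)-1 : ℤ) = α from by ring] at h'
        exact h'
    have hTint : aztecPoint n (α+1,β) :=
      tail_interior hout hn α β (α+1) β hcU (Or.inr rfl) (Or.inl rfl)
        (by rw [eUL]; simp [Prod.ext_iff] <;> omega)
    obtain ⟨q1, q2, q3, q4⟩ := AL4 n (α+1) β hTint hpar'
    have r1 := q1; have r2 := q2; have r3 := q3; have r4 := q4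
    simp only [Int.add_sub_cancel, add_assoc, h11] at r1 r2 r3 r4
    rcases node_cases hA hTint hpar' with hatt | hrep | htr
    · exfalso
      have h1 := hatt.1
      simp only [Int.add_sub_cancel] at h1
      rw [eLL] at h1
      exact absurd h1 (by simp [Prod.ext_iff] <;> omega)
    · refine ⟨α+1, β, Or.inr (Or.inr ⟨?_, ⟨⟨AL7 n _ _ hTint, hpar'⟩, hTint⟩, hrep⟩)⟩
      exact square_comp hA (α+1) β q1 q2 q3 q4 hrep.1 hrep.2.1 hrep.2.2.1 hrep.2.2.2
        (by refine ⟨⟨?_, ?_⟩, ?_, ?_⟩ <;> (try rw [hx0]) <;> push_cast <;> linarith)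
    · have cfg := transient_config hA hTint hpar' htr
      simp only [Int.add_sub_cancel, add_assoc, h11] at cfg
      rcases cfg with ⟨c1, c2, c3, c4⟩ | ⟨c1, c2, c3, c4⟩ | ⟨c1, c2, c3, c4⟩ | ⟨c1, c2, c3, c4⟩
      · exfalso; rw [eUL] at c3; exact absurd c3 (by simp [Prod.ext_iff] <;> omega)
      · -- away LL, UL : vertical domino (α,β-1),(α,β)
        refine ⟨α, β-1, Or.inr (Or.inl ?_)⟩
        have e1' : A (α, (β-1)+1) = (α, (β-1)+2) := by
          rw [show ((β-1)+1 : ℤ) = β from by ring, show ((β-1)+2 : ℤ) = β+1 from by ring]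
          exact eUL
        have hc1' : aztecCell (n+1) (α, (β-1)+1) := by
          rw [show ((β-1)+1 : ℤ) = β from by ring]; exact hcU
        have hd1' : aztecCell (n+1) (α+1, (β-1)+1) := by
          rw [show ((β-1)+1 : ℤ) = β from by ring]; exact r4
        have f0' : A (α+1, β-1) = (α+1, (β-1)+1) := by
          rw [show ((β-1)+1 : ℤ) = β from by ring]; exact c2
        have f1' : A (α+1, (β-1)+1) = (α+1, (β-1)+1) := by
          rw [show ((β-1)+1 : ℤ) = β from by ring]; exact c4
        exact vdom_comp hA α (β-1) α (α+1) (α+1) (Or.inl ⟨rfl, rfl, rfl⟩) r1 hc1' r2 hd1'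
          c1 e1' f0' f1' (by refine ⟨⟨?_, ?_⟩, ?_, ?_⟩ <;> (try rw [hx0]) <;> push_cast <;> linarith)
      · exfalso; rw [eLL] at c1; exact absurd c1 (by simp [Prod.ext_iff] <;> omega)
      · exfalso; rw [eLL] at c1; exact absurd c1 (by simp [Prod.ext_iff] <;> omega)

end Edges2
section Corner
open Set

variable {n : ℕ} {A : ℤ × ℤ → ℤ × ℤ}

lemma corner_case (hA : IsArrowField n A) (hout : Outward n A) (hn : 1 ≤ n)
    (a b α β : ℤ) {x : ℝ × ℝ} (hxB : x ∉ boldLines n A)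
    (hc : aztecCell (n+1) (a,b)) (hα : α = a ∨ α = a+1) (hβ : β = b ∨ β = b+1)
    (hx0 : x.1 = (α:ℝ)) (hx0' : x.2 = (β:ℝ)) : Concl n A x := by
  have hyl : (b:ℝ) ≤ x.2 := by
    rw [hx0']; exact_mod_cast (by omega : (b:ℤ) ≤ β)
  have hyr : x.2 ≤ (b:ℝ)+1 := by
    rw [hx0']
    have : (β:ℤ) ≤ b+1 := by omega
    exact_mod_cast this
  have hxl : (a:ℝ) ≤ x.1 := by
    rw [hx0]; exact_mod_cast (by omega : (a:ℤ) ≤ α)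
  have hxr : x.1 ≤ (a:ℝ)+1 := by
    rw [hx0]
    have : (α:ℤ) ≤ a+1 := by omega
    exact_mod_cast this
  -- (α,β) is a node
  have hpar : (α + β - (n:ℤ)) % 2 = 0 := by
    by_contra hpar
    rcases head_cases hA hc with ⟨hp, h | h⟩ | ⟨hp, h | h⟩ <;>
    · have hor : (A (a,b)).1 = α ∨ (A (a,b)).2 = β := by rw [h]; dsimp only; omega
      rcases hor with h' | h'
      · exact hxB (mem_boldLines.2 ⟨(a,b), hc, Or.inr ⟨by rw [hx0, h'], hyl, hyr⟩⟩)
      · exact hxB (mem_boldLines.2 ⟨(a,b), hc, Or.inl ⟨hxl, hxr, by rw [hx0', h']⟩⟩)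
  -- x is the tail of the cell (a,b)
  have htail : A (a,b) = (2*a+1-α, 2*b+1-β) := by
    rcases head_cases hA hc with ⟨hp, h | h⟩ | ⟨hp, h | h⟩
    · by_cases hab : α = a ∧ β = b
      · exfalso
        refine hxB (mem_boldLines.2 ⟨(a,b), hc, Or.inr ⟨?_, hyl, hyr⟩⟩)
        rw [hx0, hab.1, h]
      · have h2 : α = a+1 ∧ β = b+1 := by omega
        rw [h]; simp [Prod.ext_iff] <;> omega
    · by_cases hab : α = a+1 ∧ β = b+1
      · exfalso
        refine hxB (mem_boldLines.2 ⟨(a,b), hc, Or.inr ⟨?_, hyl, hyr⟩⟩)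
        rw [hx0, hab.1, h]; all_goals (push_cast; ring)
      · have h2 : α = a ∧ β = b := by omega
        rw [h]; simp [Prod.ext_iff] <;> omega
    · by_cases hab : α = a+1 ∧ β = b
      · exfalso
        refine hxB (mem_boldLines.2 ⟨(a,b), hc, Or.inr ⟨?_, hyl, hyr⟩⟩)
        rw [hx0, hab.1, h]; all_goals (push_cast; ring)
      · have h2 : α = a ∧ β = b+1 := by omega
        rw [h]; simp [Prod.ext_iff] <;> omega
    · by_cases hab : α = a ∧ β = b+1
      · exfalso
        refine hxB (mem_boldLines.2 ⟨(a,b), hc, Or.inr ⟨?_, hyl, hyr⟩⟩)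
        rw [hx0, hab.1, h]
      · have h2 : α = a+1 ∧ β = b := by omega
        rw [h]; simp [Prod.ext_iff] <;> omega
  have hTint : aztecPoint n (α,β) := tail_interior hout hn a b α β hc hα hβ htail
  obtain ⟨q1, q2, q3, q4⟩ := AL4 n α β hTint hpar
  -- all four arrows point away from (α,β), giving a repelling node
  have eLL : A (α-1,β-1) = (α-1,β-1) := by
    rcases around_LL hA q1 hpar with h' | h'
    · exact h'
    · exfalso
      refine hxB (mem_boldLines.2 ⟨(α-1,β-1), q1, Or.inr ⟨by rw [hx0, h'], ?_, ?_⟩⟩)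
      · rw [hx0']; all_goals (push_cast; linarith)
      · rw [hx0']; all_goals (push_cast; linarith)
  have eLR : A (α,β-1) = (α+1,β-1) := by
    rcases around_LR hA q2 hpar with h' | h'
    · exact h'
    · exfalso
      refine hxB (mem_boldLines.2 ⟨(α,β-1), q2, Or.inr ⟨by rw [hx0, h'], ?_, ?_⟩⟩)
      · rw [hx0']; all_goals (push_cast; linarith)
      · rw [hx0']; all_goals (push_cast; linarith)
  have eUL : A (α-1,β) = (α-1,β+1) := by
    rcases around_UL hA q3 hpar with h' | h'
    · exfalso
      refine hxB (mem_boldLines.2 ⟨(α-1,β), q3, Or.inr ⟨by rw [hx0, h'], ?_, ?_⟩⟩)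
      · rw [hx0']; all_goals (push_cast; linarith)
      · rw [hx0']; all_goals (push_cast; linarith)
    · exact h'
  have eUR : A (α,β) = (α+1,β+1) := by
    rcases around_UR hA q4 hpar with h' | h'
    · exfalso
      refine hxB (mem_boldLines.2 ⟨(α,β), q4, Or.inr ⟨by rw [hx0, h'], ?_, ?_⟩⟩)
      · rw [hx0']; all_goals (push_cast; linarith)
      · rw [hx0']; all_goals (push_cast; linarith)
    · exact h'
  have hrep : Repelling A (α,β) := ⟨eLL, eLR, eUL, eUR⟩
  refine ⟨α, β, Or.inr (Or.inr ⟨?_, ⟨⟨AL7 n _ _ hTint, hpar⟩, hTint⟩, hrep⟩)⟩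
  exact square_comp hA α β q1 q2 q3 q4 eLL eLR eUL eUR
    (by refine ⟨⟨?_, ?_⟩, ?_, ?_⟩ <;> (first | rw [hx0] | rw [hx0']) <;> push_cast <;> linarith)

end Corner
/-- For an outward pointing field of arrows `A` on `A_{n+1}`, every connected component
of `A_{n+1} \ B` is the interior of a `1×2` (or `2×1`) rectangle or of a `2×2` square,
and the `2×2` square components are exactly the `2×2` squares centered at the repelling
nodes of `A`. -/
theorem components_of_bold_complement (n : ℕ) (hn : 1 ≤ n) (A : ℤ × ℤ → ℤ × ℤ)
    (hA : IsArrowField n A) (hout : Outward n A) :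
    (∀ x ∈ aztecRegion (n + 1) \ boldLines n A,
      ∃ k l : ℤ,
        connectedComponentIn (aztecRegion (n + 1) \ boldLines n A) x =
            Set.Ioo (k : ℝ) (k + 2) ×ˢ Set.Ioo (l : ℝ) (l + 1) ∨
        connectedComponentIn (aztecRegion (n + 1) \ boldLines n A) x =
            Set.Ioo (k : ℝ) (k + 1) ×ˢ Set.Ioo (l : ℝ) (l + 2) ∨
        (connectedComponentIn (aztecRegion (n + 1) \ boldLines n A) x =
            Set.Ioo ((k : ℝ) - 1) (k + 1) ×ˢ Set.Ioo ((l : ℝ) - 1) (l + 1) ∧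
          InteriorNode n (k, l) ∧ Repelling A (k, l))) ∧
    (∀ N : ℤ × ℤ, InteriorNode n N → Repelling A N →
      connectedComponentIn (aztecRegion (n + 1) \ boldLines n A)
          ((N.1 : ℝ) - 1 / 2, (N.2 : ℝ) - 1 / 2) =
        Set.Ioo ((N.1 : ℝ) - 1) (N.1 + 1) ×ˢ Set.Ioo ((N.2 : ℝ) - 1) (N.2 + 1)) := by

  constructor
  · intro x hx
    obtain ⟨hxreg, hxB⟩ := hx
    rw [mem_aztecRegion] at hxreg
    obtain ⟨⟨a, b⟩, hc, h1, h2, h3, h4⟩ := hxreg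
    dsimp only at h1 h2 h3 h4
    rcases eq_or_lt_of_le h1 with e1 | l1
    · rcases eq_or_lt_of_le h3 with e3 | l3
      · exact corner_case hA hout hn a b a b hxB hc (Or.inl rfl) (Or.inl rfl) e1.symm e3.symm
      · rcases eq_or_lt_of_le h4 with e4 | l4
        · exact corner_case hA hout hn a b a (b+1) hxB hc (Or.inl rfl) (Or.inr rfl) e1.symm
            (by push_cast; exact e4)
        · exact vedge_case hA hout hn a b hxB e1.symm l3 l4 (Or.inr hc)
    · rcases eq_or_lt_of_le h2 with e2 | l2
      · rcases eq_or_lt_of_le h3 with e3 | l3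
        · exact corner_case hA hout hn a b (a+1) b hxB hc (Or.inr rfl) (Or.inl rfl)
            (by push_cast; exact e2) e3.symm
        · rcases eq_or_lt_of_le h4 with e4 | l4
          · exact corner_case hA hout hn a b (a+1) (b+1) hxB hc (Or.inr rfl) (Or.inr rfl)
              (by push_cast; exact e2) (by push_cast; exact e4)
          · exact vedge_case hA hout hn (a+1) b hxB (by push_cast; exact e2) l3 l4
              (Or.inl (by rw [show (a+1-1:ℤ) = a from by ring]; exact hc))
      · rcases eq_or_lt_of_le h3 with e3 | l3
        · exact hedge_case hA hout hn a b hxB e3.symm l1 l2 (Or.inr hc)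
        · rcases eq_or_lt_of_le h4 with e4 | l4
          · exact hedge_case hA hout hn a (b+1) hxB (by push_cast; exact e4) l1 l2
              (Or.inl (by rw [show (b+1-1:ℤ) = b from by ring]; exact hc))
          · exact interior_case hA hout hn hc l1 l2 l3 l4
  · intro N hN hrep
    obtain ⟨u, v⟩ := N
    obtain ⟨⟨_, hpar⟩, hint⟩ := hN
    obtain ⟨q1, q2, q3, q4⟩ := AL4 n u v hint hpar
    refine square_comp hA u v q1 q2 q3 q4 hrep.1 hrep.2.1 hrep.2.2.1 hrep.2.2.2
      ⟨⟨?_, ?_⟩, ?_, ?_⟩ <;> dsimp only <;> linarith
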